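/- Let V₄ = ℤ/2 × ℤ/2, let R = ℚ[V₄] be its group algebra with canonical basis {e_{(m,a)} : (m,a) ∈ V₄}, and for n ≥ 1 let ψ^n : R → R be the ℚ-linear map with ψ^n(e_{(m,a)}) = e_{(m, n·a)}. Define λ_t(x) := exp(Σ_{r≥1} (−1)^{r−1} ψ^r(x) t^r / r) ∈ R[[t]]. Then λ_t(e_{(1,0)}) = 1 + t·e_{(1,0)} + (t²/(2(1+t)))·(1 − e_{(1,0)}), where 1/(1+t) denotes the power series Σ_{k≥0} (−1)^k t^k in ℚ[[t]]. -/

import Mathlib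

/-!
STATEMENT 12: Let `V₄ = ℤ/2 × ℤ/2`, `R = ℚ[V₄]` its group algebra with basis
`e_{(m,a)}`, and for `n ≥ 1` let `ψ^n : R → R` be the ℚ-linear map with
`ψ^n(e_{(m,a)}) = e_{(m, n·a)}`.  Define
`λ_t(x) = exp (∑_{r≥1} (-1)^{r-1} ψ^r(x) t^r / r) ∈ R[[t]]`.  Then
`λ_t(e_{(1,0)}) = 1 + t·e_{(1,0)} + (t²/(2(1+t)))·(1 - e_{(1,0)})`,
where `1/(1+t) = ∑_{k≥0} (-1)^k t^k`.
-/

/-- The group algebra `ℚ[ℤ/2 × ℤ/2]`. -/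
abbrev GroupAlgV4 : Type := AddMonoidAlgebra ℚ (ZMod 2 × ZMod 2)

/-- The canonical basis element `e_{(m,a)}` of `ℚ[ℤ/2 × ℤ/2]`. -/
noncomputable def eV4 (p : ZMod 2 × ZMod 2) : GroupAlgV4 :=
  AddMonoidAlgebra.single p 1

/-- The exponential `exp S = ∑_{k ≥ 0} S^k / k!` of a formal power series `S`
with zero constant term, over a `ℚ`-algebra. -/
noncomputable def PowerSeriesExp {R : Type*} [CommRing R] [Algebra ℚ R]
    (S : PowerSeries R) : PowerSeries R :=
  PowerSeries.mk fun n =>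
    ∑ k ∈ Finset.range (n + 1), ((k.factorial : ℚ)⁻¹) • PowerSeries.coeff (R := R) n (S ^ k)

set_option linter.unusedSectionVars false

open PowerSeries


section General
variable {R : Type*} [CommRing R] [Algebra ℚ R]

lemma coeff_derivativeFun' (f : R⟦X⟧) (n : ℕ) :
    coeff n (derivativeFun f) = coeff (n + 1) f * (n + 1) :=
  coeff_derivative f n

lemma coeff_pow_eq_zero {S : R⟦X⟧} (hS : constantCoeff (R := R) S = 0) {n k : ℕ} (h : n < k) :
    coeff (R := R) n (S ^ k) = 0 :=
  (X_pow_dvd_iff.mp (pow_dvd_pow_of_dvd (X_dvd_iff.mpr hS) k)) n h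

lemma coeff_exp_of_le {S : R⟦X⟧} (hS : constantCoeff (R := R) S = 0) {n m : ℕ} (h : n ≤ m) :
    coeff (R := R) n (PowerSeriesExp S) =
      ∑ k ∈ Finset.range (m + 1), ((k.factorial : ℚ)⁻¹) • coeff (R := R) n (S ^ k) := by
  rw [PowerSeriesExp, coeff_mk]
  apply Finset.sum_subset
  · intro x hx; simp only [Finset.mem_range] at *; omega
  · intro k hk hk'
    simp only [Finset.mem_range] at hk hk'
    rw [coeff_pow_eq_zero hS (by omega), smul_zero]

lemma derivativeFun_pow (S : R⟦X⟧) (k : ℕ) :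
    derivativeFun (S ^ (k + 1)) = (k + 1 : ℕ) • (S ^ k * derivativeFun S) := by
  induction k with
  | zero => simp
  | succ k ih =>
    rw [pow_succ _ (k + 1), derivativeFun_mul, ih, smul_eq_mul, smul_eq_mul]
    rw [succ_nsmul, nsmul_eq_mul, nsmul_eq_mul]
    push_cast
    ring

lemma exp_deriv {S : R⟦X⟧} (hS : constantCoeff (R := R) S = 0) :
    derivativeFun (PowerSeriesExp S) = derivativeFun S * PowerSeriesExp S := by
  ext n
  set T : R⟦X⟧ := ∑ k ∈ Finset.range (n + 2), ((k.factorial : ℚ)⁻¹) • S ^ k with hTdef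
  have hT : ∀ j, j ≤ n → coeff (R := R) j (PowerSeriesExp S) = coeff (R := R) j T := by
    intro j hj
    rw [coeff_exp_of_le hS (le_trans hj (Nat.le_succ n)), hTdef, map_sum]
    simp only [coeff_smul]
  have hmul : coeff (R := R) n (derivativeFun S * PowerSeriesExp S)
      = coeff (R := R) n (derivativeFun S * T) := by
    rw [coeff_mul, coeff_mul]
    apply Finset.sum_congr rfl
    intro p hp
    rw [Finset.HasAntidiagonal.mem_antidiagonal] at hp
    rw [hT p.2 (by omega)]
  rw [hmul, coeff_derivativeFun', coeff_exp_of_le hS (le_refl (n + 1))]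
  -- RHS: coeff n (DS * T) = ∑_k (1/k!) • coeff n (DS * S^k)
  have h1 : derivativeFun S * T
      = ∑ k ∈ Finset.range (n + 2), ((k.factorial : ℚ)⁻¹) • (S ^ k * derivativeFun S) := by
    rw [hTdef, Finset.mul_sum]
    apply Finset.sum_congr rfl
    intro k _
    rw [mul_smul_comm, mul_comm]
  have h2 : ∀ k : ℕ, coeff (R := R) n (S ^ k * derivativeFun S)
      = (((k + 1 : ℕ) : ℚ))⁻¹ • (coeff (R := R) (n + 1) (S ^ (k + 1)) * (n + 1)) := by
    intro k
    have := congrArg (fun f => coeff (R := R) n f) (derivativeFun_pow S k)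
    simp only [map_nsmul, coeff_derivativeFun'] at this
    have hk0 : (((k + 1 : ℕ) : ℚ)) ≠ 0 := by positivity
    rw [eq_comm, inv_smul_eq_iff₀ hk0, Nat.cast_smul_eq_nsmul ℚ]
    exact this
  rw [h1, map_sum]
  simp only [coeff_smul, h2]
  rw [Finset.sum_mul]
  rw [Finset.sum_range_succ' (fun k => ((k.factorial : ℚ)⁻¹ • coeff (R := R) (n+1) (S ^ k)) * ((n:R) + 1)) (n+1)]
  rw [Finset.sum_range_succ (fun k => (k.factorial : ℚ)⁻¹ • ((((k+1:ℕ):ℚ))⁻¹ • (coeff (R := R) (n + 1) (S ^ (k + 1)) * ((n:R) + 1)))) (n+1)]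
  rw [coeff_pow_eq_zero hS (by omega : n + 1 < n + 2), pow_zero, coeff_one,
    if_neg (Nat.succ_ne_zero n)]
  simp only [smul_zero, zero_mul, mul_zero, add_zero]
  apply Finset.sum_congr rfl
  intro k _
  rw [smul_smul, smul_mul_assoc]
  congr 1
  rw [Nat.factorial_succ]
  push_cast
  rw [mul_inv]
  ring
end General


lemma eV4_sq : eV4 (1, 0) * eV4 (1, 0) = 1 := by
  rw [eV4, AddMonoidAlgebra.single_mul_single, one_mul, AddMonoidAlgebra.one_def]
  have h : ((1, 0) + (1, 0) : ZMod 2 × ZMod 2) = 0 := by decide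
  rw [h]

lemma mul_cast_succ (x : GroupAlgV4) (n : ℕ) :
    x * ((n : GroupAlgV4) + 1) = ((n : ℚ) + 1) • x := by
  have h : ((n : GroupAlgV4) + 1) = algebraMap ℚ GroupAlgV4 ((n : ℚ) + 1) := by
    rw [map_add, map_one, map_natCast]
  rw [h, mul_comm, ← Algebra.smul_def]

theorem orbifold_lambda_of_e10
    (psi : ℕ → GroupAlgV4 →ₗ[ℚ] GroupAlgV4)
    (hpsi : ∀ n : ℕ, 1 ≤ n → ∀ p : ZMod 2 × ZMod 2,
      psi n (eV4 p) = eV4 (p.1, n • p.2)) :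
    PowerSeriesExp
        (PowerSeries.mk fun r =>
          if r = 0 then 0
          else ((-1 : ℚ) ^ (r - 1) / r) • psi r (eV4 (1, 0)))
      = 1 + PowerSeries.X * PowerSeries.C (R := GroupAlgV4) (eV4 (1, 0))
          + (1 / 2 : ℚ) •
            (PowerSeries.X ^ 2 *
              (PowerSeries.mk fun k => ((-1 : ℚ) ^ k) • (1 : GroupAlgV4)) *
              PowerSeries.C (R := GroupAlgV4) (1 - eV4 (1, 0))) := by
  set e : GroupAlgV4 := eV4 (1, 0) with hedef
  set S : GroupAlgV4⟦X⟧ := PowerSeries.mk fun r =>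
      if r = 0 then 0 else ((-1 : ℚ) ^ (r - 1) / r) • psi r (eV4 (1, 0)) with hSdef
  have hco : ∀ r : ℕ, coeff (R := GroupAlgV4) r S
      = if r = 0 then 0 else ((-1 : ℚ) ^ (r - 1) / r) • e := by
    intro r
    rw [hSdef, coeff_mk]
    split_ifs with h
    · rfl
    · rw [hpsi r (by omega) (1, 0)]
      simp [hedef]
  have hS0 : constantCoeff (R := GroupAlgV4) S = 0 := by
    rw [← coeff_zero_eq_constantCoeff_apply, hco]; simp
  have he : e * e = 1 := eV4_sq
  have hDS : derivativeFun S = PowerSeries.mk fun j => ((-1 : ℚ) ^ j) • e := by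
    apply PowerSeries.ext
    intro j
    rw [coeff_derivativeFun', coeff_mk, coeff_mk, if_neg (Nat.succ_ne_zero j),
      hpsi (j + 1) (by omega) (1, 0)]
    have h0 : ((j + 1) • (0 : ZMod 2)) = 0 := smul_zero _
    rw [h0, Nat.add_sub_cancel, smul_mul_assoc, mul_cast_succ, smul_smul]
    congr 1
    have : ((j : ℚ) + 1) ≠ 0 := by positivity
    field_simp
    push_cast
    rfl
  have h1X : (1 + X) * derivativeFun S = C (R := GroupAlgV4) e := by
    apply PowerSeries.ext
    intro n
    rw [add_mul, one_mul, map_add, hDS]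
    cases n with
    | zero => simp
    | succ m =>
      rw [coeff_mk, coeff_succ_X_mul, coeff_mk, coeff_C, if_neg (Nat.succ_ne_zero m),
        pow_succ, ← add_smul]
      norm_num
  have hkey : (1 + X) * derivativeFun (PowerSeriesExp S) = C (R := GroupAlgV4) e * PowerSeriesExp S := by
    rw [exp_deriv hS0, ← mul_assoc, h1X]
  set F := PowerSeriesExp S with hF
  have hrecA : ∀ n : ℕ, ((n : ℚ) + 1) • coeff (R := GroupAlgV4) (n + 1) F
      = e * coeff (R := GroupAlgV4) n F - (n : ℚ) • coeff (R := GroupAlgV4) n F := by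
    intro n
    have h := congrArg (fun f => coeff (R := GroupAlgV4) n f) hkey
    simp only [add_mul, one_mul, map_add, coeff_C_mul] at h
    rw [coeff_derivativeFun', mul_cast_succ] at h
    cases n with
    | zero =>
      rw [coeff_zero_X_mul] at h
      simpa using h
    | succ m =>
      rw [coeff_succ_X_mul, coeff_derivativeFun', mul_cast_succ] at h
      push_cast at h ⊢
      linear_combination h
  -- coefficients of the RHS
  set Rhs : GroupAlgV4⟦X⟧ := 1 + PowerSeries.X * PowerSeries.C (R := GroupAlgV4) e
          + (1 / 2 : ℚ) •
            (PowerSeries.X ^ 2 *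
              (PowerSeries.mk fun k => ((-1 : ℚ) ^ k) • (1 : GroupAlgV4)) *
              PowerSeries.C (R := GroupAlgV4) (1 - e)) with hR
  have hb : ∀ n : ℕ, coeff (R := GroupAlgV4) n Rhs
      = if n = 0 then 1 else if n = 1 then e
        else ((-1 : ℚ) ^ n * (1 / 2)) • (1 - e) := by
    intro n
    rw [hR]
    rw [map_add, map_add, coeff_one, coeff_smul, coeff_mul_C, coeff_X,
      coeff_mul_C, coeff_X_pow_mul', coeff_mk]
    match n with
    | 0 =>
      rw [if_pos rfl, if_neg (by omega), if_neg (by omega), if_pos rfl]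
      simp
    | 1 =>
      rw [if_neg (by omega), if_pos rfl, if_neg (by omega), if_neg (by omega), if_pos rfl]
      simp
    | (m + 2) =>
      rw [if_neg (by omega), if_neg (by omega), if_pos (by omega), Nat.add_sub_cancel,
        if_neg (by omega), if_neg (by omega)]
      rw [smul_mul_assoc, one_mul, smul_smul, pow_add]
      norm_num [mul_comm]
  have hrecB : ∀ n : ℕ, ((n : ℚ) + 1) • coeff (R := GroupAlgV4) (n + 1) Rhs
      = e * coeff (R := GroupAlgV4) n Rhs - (n : ℚ) • coeff (R := GroupAlgV4) n Rhs := by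
    intro n
    rw [hb, hb]
    match n with
    | 0 => norm_num
    | 1 =>
      rw [if_neg (by omega), if_neg (by omega), if_neg (by omega), if_pos rfl, he]
      push_cast
      module
    | (m + 2) =>
      rw [if_neg (by omega), if_neg (by omega), if_neg (by omega), if_neg (by omega)]
      rw [mul_smul_comm, mul_sub, mul_one, he, pow_succ]
      push_cast
      module
  have ha0 : coeff (R := GroupAlgV4) 0 F = 1 := by
    rw [hF, coeff_exp_of_le hS0 (le_refl 0)]
    simp
  apply PowerSeries.ext
  intro n
  induction n with
  | zero => rw [ha0, hb 0]; norm_num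
  | succ m ih =>
    have h1 := hrecA m
    rw [ih] at h1
    exact smul_right_injective GroupAlgV4 (by positivity : ((m : ℚ) + 1) ≠ 0)
      (h1.trans (hrecB m).symm)
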